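/- Let β > 1 be a real number and suppose that for every rational x ∈ [0,1) the orbit of x under the beta-transformation T_β is ultimately periodic (there exist k ∈ ℕ and l ≥ 1 with T_β^{k+l}(x) = T_β^k(x)). Then β is an algebraic integer and every complex root of the minimal polynomial of β other than β itself has modulus at most 1; that is, β is either a Pisot number or a Salem number. -/

import Mathlib

/-- The beta-transformation `T_β(γ) = βγ - ⌊βγ⌋`. -/
noncomputable def betaT (β : ℝ) (x : ℝ) : ℝ := Int.fract (β * x)

namespace Schmidt0

open Polynomial

variable (β : ℝ)

noncomputable def z (x : ℝ) (n : ℕ) : ℝ := (betaT β)^[n] x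

noncomputable def dig (x : ℝ) (n : ℕ) : ℤ := ⌊β * z β x n⌋

lemma z_zero (x : ℝ) : z β x 0 = x := rfl

lemma z_succ (x : ℝ) (n : ℕ) : z β x (n+1) = Int.fract (β * z β x n) := by
  unfold z; rw [Function.iterate_succ_apply']; rfl

lemma z_succ' (x : ℝ) (n : ℕ) : z β x (n+1) = β * z β x n - (dig β x n : ℝ) := by
  rw [z_succ]; rfl

lemma z_mem (x : ℝ) (hx : x ∈ Set.Ico (0:ℝ) 1) (n : ℕ) : z β x n ∈ Set.Ico (0:ℝ) 1 := by
  cases n with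
  | zero => exact hx
  | succ n => rw [z_succ]; exact ⟨Int.fract_nonneg _, Int.fract_lt_one _⟩

lemma dig_nonneg (hβ : 0 < β) (x : ℝ) (hx : x ∈ Set.Ico (0:ℝ) 1) (n : ℕ) : 0 ≤ dig β x n :=
  Int.floor_nonneg.mpr (mul_nonneg hβ.le (z_mem β x hx n).1)

lemma dig_lt (hβ : 0 < β) (x : ℝ) (hx : x ∈ Set.Ico (0:ℝ) 1) (n : ℕ) : (dig β x n : ℝ) < β := by
  have h1 := (z_mem β x hx n).2
  have h0 := (z_mem β x hx n).1
  have h2 : (dig β x n : ℝ) ≤ β * z β x n := Int.floor_le _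
  nlinarith

noncomputable def W (x : ℚ) : ℕ → Polynomial ℚ
  | 0 => C x
  | n + 1 => X * W x n + C (-(dig β (x : ℝ) n : ℚ))

lemma aeval_W_beta (x : ℚ) (n : ℕ) : aeval β (W β x n) = z β (x : ℝ) n := by
  induction n with
  | zero => simp [W, z_zero]
  | succ n ih =>
      rw [W, map_add, map_mul, aeval_X, ih, aeval_C, z_succ']
      push_cast
      ring_nf
      norm_cast

lemma aeval_W_mu (μ : ℂ) (x : ℚ) (n : ℕ) :
    aeval μ (W β x (n+1)) = μ * aeval μ (W β x n) - (dig β (x : ℝ) n : ℂ) := by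
  rw [W, map_add, map_mul, aeval_X, aeval_C]
  push_cast
  ring_nf
  norm_cast

lemma aeval_W_mu_zero (μ : ℂ) (x : ℚ) : aeval μ (W β x 0) = (x : ℂ) := by
  simp [W]

noncomputable def U : ℕ → Polynomial ℤ
  | 0 => 1
  | n + 1 => X * U n + C (-(2 * dig β (1/2 : ℝ) n))

lemma aeval_U (n : ℕ) : aeval β (U β n) = 2 * z β (1/2 : ℝ) n := by
  induction n with
  | zero => simp [U, z_zero]
  | succ n ih =>
      rw [U, map_add, map_mul, aeval_X, ih, aeval_C, z_succ']
      push_cast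
      ring_nf
      norm_num
      ring

lemma U_monic (n : ℕ) : (U β n).Monic ∧ (U β n).degree = n := by
  induction n with
  | zero => exact ⟨monic_one, degree_one⟩
  | succ n ih =>
      have hm : (X * U β n).Monic := monic_X.mul ih.1
      have hd : (X * U β n).degree = ((n + 1 : ℕ) : WithBot ℕ) := by
        rw [degree_mul, degree_X, ih.2]
        norm_cast
        exact add_comm 1 n
      have hlt : (C (-(2 * dig β (1/2 : ℝ) n)) : Polynomial ℤ).degree < (X * U β n).degree := by
        refine lt_of_le_of_lt (degree_C_le) ?_
        rw [hd]
        exact_mod_cast Nat.succ_pos n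
      constructor
      · exact hm.add_of_left hlt
      · rw [U, degree_add_eq_left_of_degree_lt hlt, hd]


lemma z_per (x : ℝ) (k l : ℕ) (hkl : (betaT β)^[k+l] x = (betaT β)^[k] x) (j : ℕ) :
    z β x (j + (k + l)) = z β x (j + k) := by
  unfold z
  rw [Function.iterate_add_apply, hkl, ← Function.iterate_add_apply]

lemma integral
    (hper : ∀ q : ℚ, (q : ℝ) ∈ Set.Ico (0 : ℝ) 1 →
      ∃ k l : ℕ, 1 ≤ l ∧ (betaT β)^[k + l] (q : ℝ) = (betaT β)^[k] (q : ℝ)) :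
    IsIntegral ℤ β := by
  obtain ⟨k, l, hl, hkl⟩ := hper (1/2) (by norm_num)
  have hc : ((1/2 : ℚ) : ℝ) = (1/2 : ℝ) := by norm_num
  rw [hc] at hkl
  have hdeg : (U β k).degree < (U β (k + l)).degree := by
    rw [(U_monic β k).2, (U_monic β (k+l)).2]
    exact_mod_cast Nat.lt_add_of_pos_right hl
  refine ⟨U β (k + l) - U β k, (U_monic β (k+l)).1.sub_of_left hdeg, ?_⟩
  have : aeval β (U β (k + l) - U β k) = 0 := by
    rw [map_sub, aeval_U, aeval_U]
    have h0 : z β (1/2 : ℝ) (0 + (k + l)) = z β (1/2 : ℝ) (0 + k) := z_per β _ k l hkl 0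
    simp only [Nat.zero_add] at h0
    rw [h0]
    ring
  rw [aeval_def] at this
  exact this

lemma aeval_mu_eq (hint : IsIntegral ℤ β) {μ : ℂ}
    (hroot : ((minpoly ℤ β).map (Int.castRingHom ℂ)).IsRoot μ)
    {P : Polynomial ℚ} (hP : aeval β P = 0) : aeval μ P = 0 := by
  have h2 : minpoly ℚ β = (minpoly ℤ β).map (algebraMap ℤ ℚ) :=
    minpoly.isIntegrallyClosed_eq_field_fractions' ℚ hint
  have h3 : aeval μ (minpoly ℚ β) = 0 := by
    rw [h2, aeval_map_algebraMap, aeval_def, ← eval_map]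
    exact hroot
  obtain ⟨c, hc⟩ := minpoly.dvd ℚ β hP
  rw [hc, map_mul, h3, zero_mul]


lemma zeta_per (hint : IsIntegral ℤ β) {μ : ℂ}
    (hroot : ((minpoly ℤ β).map (Int.castRingHom ℂ)).IsRoot μ)
    (x : ℚ) (k l : ℕ) (hkl : (betaT β)^[k+l] (x : ℝ) = (betaT β)^[k] (x : ℝ)) (j : ℕ) :
    aeval μ (W β x (j + (k + l))) = aeval μ (W β x (j + k)) := by
  have hz := z_per β (x : ℝ) k l hkl j
  have hP : aeval β (W β x (j + (k + l)) - W β x (j + k)) = 0 := by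
    rw [map_sub, aeval_W_beta, aeval_W_beta, hz, sub_self]
  have h := aeval_mu_eq β hint hroot hP
  rwa [map_sub, sub_eq_zero] at h

lemma zeta_range (hint : IsIntegral ℤ β) {μ : ℂ}
    (hroot : ((minpoly ℤ β).map (Int.castRingHom ℂ)).IsRoot μ)
    (x : ℚ) (k l : ℕ) (hl : 1 ≤ l)
    (hkl : (betaT β)^[k+l] (x : ℝ) = (betaT β)^[k] (x : ℝ)) :
    ∀ n, ∃ m, m ≤ k + l ∧ aeval μ (W β x n) = aeval μ (W β x m) := by
  intro n
  induction n using Nat.strong_induction_on with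
  | _ n ih =>
    by_cases h : n ≤ k + l
    · exact ⟨n, h, rfl⟩
    · push_neg at h
      have hj : n = (n - (k + l)) + (k + l) := (Nat.sub_add_cancel h.le).symm
      have h1 : aeval μ (W β x n) = aeval μ (W β x ((n - (k + l)) + k)) := by
        conv_lhs => rw [hj]
        exact zeta_per β hint hroot x k l hkl _
      have hlt : (n - (k + l)) + k < n := by omega
      obtain ⟨m, hm, he⟩ := ih _ hlt
      exact ⟨m, hm, h1.trans he⟩

lemma zeta_lt (hβ : 1 < β) (hint : IsIntegral ℤ β) {μ : ℂ}
    (hroot : ((minpoly ℤ β).map (Int.castRingHom ℂ)).IsRoot μ)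
    (hμ : 1 < ‖μ‖) (x : ℚ) (hx : (x : ℝ) ∈ Set.Ico (0:ℝ) 1)
    (k l : ℕ) (hl : 1 ≤ l)
    (hkl : (betaT β)^[k+l] (x : ℝ) = (betaT β)^[k] (x : ℝ)) :
    ∀ n, ‖aeval μ (W β x n)‖ < (β + 1)/(‖μ‖ - 1) + 1 := by
  set a := ‖μ‖ with ha
  set Cst := (β + 1)/(a - 1) + 1 with hCst
  set ζ := fun n => aeval μ (W β x n) with hζ
  have ha1 : 0 < a - 1 := by linarith
  set B := (Finset.range (k + l + 1)).sup' (Finset.nonempty_range_iff.mpr (Nat.succ_ne_zero _))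
      (fun m => ‖ζ m‖) with hBdef
  have hB : ∀ n, ‖ζ n‖ ≤ B := by
    intro n
    obtain ⟨m, hm, he⟩ := zeta_range β hint hroot x k l hl hkl n
    show ‖aeval μ (W β x n)‖ ≤ B
    rw [he]
    exact Finset.le_sup' (fun m => ‖ζ m‖) (Finset.mem_range.mpr (by omega))
  by_contra hcon
  push_neg at hcon
  obtain ⟨N, hN⟩ := hcon
  have hstep : ∀ n, Cst - 1 ≤ ‖ζ n‖ →
      ‖ζ n‖ + 1 ≤ ‖ζ (n+1)‖ := by
    intro n hn
    have he : ζ (n+1) = μ * ζ n - ((dig β (x : ℝ) n : ℂ)) := aeval_W_mu β μ x n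
    have hd0 : (0 : ℝ) ≤ (dig β (x : ℝ) n : ℝ) := by
      exact_mod_cast dig_nonneg β (by linarith) (x : ℝ) hx n
    have hd1 : (dig β (x : ℝ) n : ℝ) < β := dig_lt β (by linarith) (x : ℝ) hx n
    have habs : ‖(dig β (x : ℝ) n : ℂ)‖ ≤ β := by
      have : ((dig β (x : ℝ) n : ℤ) : ℂ) = (((dig β (x : ℝ) n : ℝ)) : ℂ) := by push_cast; ring
      rw [this, Complex.norm_real, Real.norm_eq_abs, abs_of_nonneg hd0]
      linarith
    have h1 : a * ‖ζ n‖ - β ≤ ‖ζ (n+1)‖ := by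
      rw [he]
      calc a * ‖ζ n‖ - β
          ≤ ‖μ * ζ n‖ - ‖(dig β (x : ℝ) n : ℂ)‖ := by
            rw [norm_mul]; linarith
        _ ≤ ‖μ * ζ n - ((dig β (x : ℝ) n : ℂ))‖ := by
            have h := norm_sub_norm_le (μ * ζ n) ((dig β (x : ℝ) n : ℂ))
            simpa using h
    have hn' : β + 1 ≤ ‖ζ n‖ * (a - 1) := by
      have : (β + 1)/(a - 1) ≤ ‖ζ n‖ := by
        rw [hCst] at hn; linarith
      calc β + 1 = ((β + 1)/(a-1)) * (a - 1) := by field_simp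
        _ ≤ ‖ζ n‖ * (a - 1) := by
            exact mul_le_mul_of_nonneg_right this ha1.le
    nlinarith
  have grow : ∀ j : ℕ, Cst + j ≤ ‖ζ (N + j)‖ := by
    intro j
    induction j with
    | zero => simpa using hN
    | succ j ihj =>
        have h1 : Cst - 1 ≤ ‖ζ (N + j)‖ := by
          have : (0:ℝ) ≤ j := Nat.cast_nonneg j
          linarith
        have h2 := hstep (N + j) h1
        have : (N + (j+1)) = (N + j) + 1 := by omega
        rw [this]
        push_cast
        push_cast at ihj
        linarith
  obtain ⟨j, hj⟩ := exists_nat_gt (B - Cst)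
  have h1 := grow j
  have h2 := hB (N + j)
  linarith

end Schmidt0



open Polynomial

/-- if the `T_β`-orbit of every rational in `[0,1)` is ultimately
periodic, then `β` is an algebraic integer all of whose conjugates other than `β`
itself have modulus at most `1` (i.e., `β` is a Pisot or a Salem number). -/
theorem periodic_rationals_pisot_or_salem (β : ℝ) (hβ : 1 < β)
    (hper : ∀ q : ℚ, (q : ℝ) ∈ Set.Ico (0 : ℝ) 1 →
      ∃ k l : ℕ, 1 ≤ l ∧ (betaT β)^[k + l] (q : ℝ) = (betaT β)^[k] (q : ℝ)) :
    IsIntegral ℤ β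
    ∧ ∀ μ : ℂ, ((minpoly ℤ β).map (Int.castRingHom ℂ)).IsRoot μ →
        μ ≠ (β : ℂ) → ‖μ‖ ≤ 1 := by
  have hint : IsIntegral ℤ β := Schmidt0.integral β hper
  refine ⟨hint, ?_⟩
  intro μ hroot hne
  by_contra hcon
  push_neg at hcon
  set a := ‖μ‖ with ha
  have hβ0 : 0 < β := by linarith
  have ha1 : 0 < a - 1 := by linarith
  set Cst := (β + 1)/(a - 1) + 1 with hCst
  have hCpos : 0 < Cst := by
    have h : 0 ≤ (β + 1)/(a-1) := by positivity
    rw [hCst]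
    linarith
  have hβne : (β : ℂ) ≠ 0 := by
    simp only [ne_eq, Complex.ofReal_eq_zero]
    linarith
  set c₀ := ‖μ / (β : ℂ) - 1‖ with hc₀def
  have hc₀ : 0 < c₀ := by
    have hne' : μ / (β : ℂ) - 1 ≠ 0 := by
      intro h
      apply hne
      have : μ / (β : ℂ) = 1 := by
        have := sub_eq_zero.mp h
        exact this
      field_simp at this
      exact this
    exact norm_pos_iff.mpr hne'
  have hc₀2 : 0 < c₀ / 2 := by linarith
  obtain ⟨M₁, hM₁⟩ := pow_unbounded_of_one_lt (Cst / (c₀/2)) hcon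
  obtain ⟨M₂, hM₂⟩ := pow_unbounded_of_one_lt (a / (c₀/2)) hβ
  obtain ⟨M₃, hM₃⟩ := pow_unbounded_of_one_lt (β/(β-1)) hβ
  set M := M₁ + M₂ + M₃ with hM
  have haM : a ^ M₁ ≤ a ^ M := pow_le_pow_right₀ (by linarith) (by omega)
  have hbM2 : β ^ M₂ ≤ β ^ (M+1) := pow_le_pow_right₀ hβ.le (by omega)
  have hbM3 : β ^ M₃ ≤ β ^ (M+1) := pow_le_pow_right₀ hβ.le (by omega)
  have hbMM : β ^ (M+1) = β ^ M * β := pow_succ β M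
  have hbpos : 0 < β ^ (M+1) := pow_pos hβ0 _
  have hbMpos : 0 < β ^ M := pow_pos hβ0 _
  have haMpos : 0 < a ^ M := pow_pos (by linarith) _
  -- (i)
  have hi : Cst < a ^ M * (c₀ / 2) := by
    have h1 : Cst / (c₀/2) < a ^ M := lt_of_lt_of_le hM₁ haM
    calc Cst = (Cst/(c₀/2)) * (c₀/2) := by field_simp
      _ < a ^ M * (c₀/2) := mul_lt_mul_of_pos_right h1 hc₀2
  -- (ii)
  have hii : a * (β ^ (M+1))⁻¹ < c₀ / 2 := by
    have h1 : a / (c₀/2) < β ^ (M+1) := lt_of_lt_of_le hM₂ hbM2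
    rw [div_lt_iff₀ hc₀2] at h1
    rw [← div_eq_mul_inv, div_lt_iff₀ hbpos]
    linarith [mul_comm (β ^ (M+1)) (c₀/2)]
  -- (iv)
  have hiv : (β ^ (M+1))⁻¹ < 1 - 1/β := by
    have h1 : β/(β-1) < β ^ (M+1) := lt_of_lt_of_le hM₃ hbM3
    have h2 : (β ^ (M+1))⁻¹ < (β/(β-1))⁻¹ := by
      apply inv_strictAnti₀
      · exact div_pos (by linarith) (by linarith)
      · exact h1
    rw [inv_div] at h2
    have : (β - 1)/β = 1 - 1/β := by field_simp
    linarith [h2, this.symm.le]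
  -- choose the rational
  have hlt : (1/β : ℝ) < 1/β + (β ^ (M+1))⁻¹ := by
    have : 0 < (β ^ (M+1))⁻¹ := by positivity
    linarith
  obtain ⟨x, hx1, hx2⟩ := exists_rat_btwn hlt
  have hxpos : 0 < (x : ℝ) := lt_trans (by positivity) hx1
  have hxlt1 : (x : ℝ) < 1 := by
    have h1 : (x : ℝ) < 1/β + (1 - 1/β) := lt_trans hx2 (by linarith)
    linarith
  have hxIco : (x : ℝ) ∈ Set.Ico (0 : ℝ) 1 := ⟨hxpos.le, hxlt1⟩
  obtain ⟨k, l, hl, hkl⟩ := hper x hxIco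
  have hζlt := Schmidt0.zeta_lt β hβ hint hroot hcon x hxIco k l hl hkl
  -- digit computations
  have hbx1 : 1 < β * (x : ℝ) := by
    have := mul_lt_mul_of_pos_left hx1 hβ0
    rw [mul_one_div, div_self (by linarith : β ≠ 0)] at this
    exact this
  have hbx2 : β * (x : ℝ) - 1 < (β ^ M)⁻¹ := by
    have h1 : β * (x : ℝ) < β * (1/β + (β ^ (M+1))⁻¹) := mul_lt_mul_of_pos_left hx2 hβ0
    have h2 : β * (1/β + (β ^ (M+1))⁻¹) = 1 + (β ^ M)⁻¹ := by
      rw [hbMM]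
      field_simp
    linarith [h1, h2.symm.le]
  have hMβ1 : (β ^ M)⁻¹ ≤ 1 := by
    have h1 : (1:ℝ) ≤ β ^ M := by simpa using pow_le_pow_right₀ hβ.le (Nat.zero_le M)
    have h2 : (β ^ M)⁻¹ * β ^ M = 1 := inv_mul_cancel₀ (by positivity)
    nlinarith [inv_pos.mpr hbMpos]
  have hfl : ⌊β * (x : ℝ)⌋ = 1 := by
    rw [Int.floor_eq_iff]
    constructor
    · push_cast; linarith
    · push_cast; linarith
  have hz1 : Schmidt0.z β (x : ℝ) 1 = β * (x : ℝ) - 1 := by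
    rw [Schmidt0.z_succ]
    rw [Schmidt0.z_zero]
    rw [Int.fract, hfl]
    push_cast
    ring
  have hzj : ∀ j, j ≤ M → Schmidt0.z β (x : ℝ) (1+j) = β ^ j * (β * (x : ℝ) - 1) := by
    intro j hj
    induction j with
    | zero => simpa using hz1
    | succ j ih =>
        have ih' := ih (by omega)
        have hb : 0 ≤ β ^ (j+1) * (β * (x : ℝ) - 1) := by
          have : 0 < β * (x:ℝ) - 1 := by linarith
          positivity
        have hb2 : β ^ (j+1) * (β * (x : ℝ) - 1) < 1 := by
          have h1 : β ^ (j+1) * (β * (x : ℝ) - 1) < β ^ (j+1) * (β ^ M)⁻¹ :=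
            mul_lt_mul_of_pos_left hbx2 (pow_pos hβ0 _)
          have h2 : β ^ (j+1) ≤ β ^ M := pow_le_pow_right₀ hβ.le (by omega)
          have h3 : β ^ (j+1) * (β ^ M)⁻¹ ≤ β ^ M * (β ^ M)⁻¹ :=
            mul_le_mul_of_nonneg_right h2 (by positivity)
          rw [mul_inv_cancel₀ (by positivity : (β:ℝ) ^ M ≠ 0)] at h3
          linarith
        have : Schmidt0.z β (x : ℝ) (1 + (j+1)) = Int.fract (β * Schmidt0.z β (x : ℝ) (1+j)) :=
          Schmidt0.z_succ β (x : ℝ) (1+j)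
        rw [this, ih']
        have heq : β * (β ^ j * (β * (x:ℝ) - 1)) = β ^ (j+1) * (β * (x:ℝ) - 1) := by
          rw [pow_succ]; ring
        rw [heq, Int.fract_eq_self.mpr ⟨hb, hb2⟩]
  have hd0 : Schmidt0.dig β (x : ℝ) 0 = 1 := by
    unfold Schmidt0.dig
    rw [Schmidt0.z_zero]
    exact hfl
  have hdj : ∀ j, j < M → Schmidt0.dig β (x : ℝ) (1+j) = 0 := by
    intro j hj
    unfold Schmidt0.dig
    rw [hzj j (by omega)]
    rw [Int.floor_eq_zero_iff]
    constructor
    · have : 0 < β * (x:ℝ) - 1 := by linarith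
      positivity
    · have h1 : β * (β ^ j * (β * (x : ℝ) - 1)) = β ^ (j+1) * (β * (x : ℝ) - 1) := by
        rw [pow_succ]; ring
      rw [h1]
      have h2 : β ^ (j+1) * (β * (x : ℝ) - 1) < β ^ (j+1) * (β ^ M)⁻¹ :=
        mul_lt_mul_of_pos_left hbx2 (pow_pos hβ0 _)
      have h3 : β ^ (j+1) ≤ β ^ M := pow_le_pow_right₀ hβ.le (by omega)
      have h4 : β ^ (j+1) * (β ^ M)⁻¹ ≤ β ^ M * (β ^ M)⁻¹ :=
        mul_le_mul_of_nonneg_right h3 (by positivity)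
      rw [mul_inv_cancel₀ (by positivity : (β:ℝ) ^ M ≠ 0)] at h4
      linarith
  have hζ1 : aeval μ (Schmidt0.W β x 1) = μ * (x : ℂ) - 1 := by
    have h := Schmidt0.aeval_W_mu β μ x 0
    rw [Schmidt0.aeval_W_mu_zero, hd0] at h
    simpa using h
  have hζj : ∀ j, j ≤ M → aeval μ (Schmidt0.W β x (1+j)) = μ ^ j * (μ * (x : ℂ) - 1) := by
    intro j hj
    induction j with
    | zero => simpa using hζ1
    | succ j ih =>
        have ih' := ih (by omega)
        have h := Schmidt0.aeval_W_mu β μ x (1+j)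
        rw [hdj j (by omega)] at h
        have hidx : 1 + (j + 1) = (1 + j) + 1 := by omega
        rw [hidx, h, ih']
        push_cast
        ring
  -- final contradiction
  have hfin := hζlt (1 + M)
  rw [hζj M le_rfl] at hfin
  have habs : ‖μ ^ M * (μ * (x : ℂ) - 1)‖ = a ^ M * ‖μ * (x : ℂ) - 1‖ := by
    rw [norm_mul, norm_pow]
  rw [habs] at hfin
  have hlow : c₀ / 2 < ‖μ * (x : ℂ) - 1‖ := by
    have hdiff : (μ / (β:ℂ) - 1) - (μ * (x : ℂ) - 1) = μ * ((1/(β:ℝ) - (x:ℝ) : ℝ) : ℂ) := by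
      push_cast
      field_simp
      ring
    have h1 : c₀ - ‖μ * (x : ℂ) - 1‖ ≤
        ‖(μ / (β:ℂ) - 1) - (μ * (x : ℂ) - 1)‖ := by
      have h := norm_sub_norm_le (μ / (β:ℂ) - 1) (μ * (x : ℂ) - 1)
      simpa using h
    have h2 : ‖(μ / (β:ℂ) - 1) - (μ * (x : ℂ) - 1)‖ = a * |1/β - (x:ℝ)| := by
      rw [hdiff, norm_mul, Complex.norm_real, Real.norm_eq_abs]
    have h3 : |1/β - (x:ℝ)| < (β ^ (M+1))⁻¹ := by
      rw [abs_of_neg (by linarith)]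
      linarith
    have h4 : a * |1/β - (x:ℝ)| < a * (β ^ (M+1))⁻¹ :=
      mul_lt_mul_of_pos_left h3 (by linarith)
    have h5 : ‖(μ / (β:ℂ) - 1) - (μ * (x : ℂ) - 1)‖ < c₀ / 2 := by
      rw [h2]; linarith
    linarith
  have hbig : a ^ M * (c₀/2) < a ^ M * ‖μ * (x : ℂ) - 1‖ :=
    mul_lt_mul_of_pos_left hlow haMpos
  linarith
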